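/- Let n ≥ 2, let A be an invertible n×n real matrix, b, c ∈ ℝⁿ with c₁ ≠ 0 and ρᵀ c ≠ 0, where ρᵀ = e₁ᵀ adj(A), and let μ ∈ ℝ. Suppose x ∈ ℝⁿ satisfies x₁ = 0 and Ax + bμ − (e₁ᵀ(Ax + bμ)/c₁) c = 0 (i.e., x is a pseudo-equilibrium of the piecewise-linear system on the discontinuity surface). Then e₁ᵀ(Ax + bμ) = (ρᵀ b) c₁ μ / (ρᵀ c). -/

import Mathlib

open Matrix

/-- Lemma 4: at a pseudo-equilibrium `x` of the piecewise-linear system,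
`F₁ᴸ(x;μ) = e₁ᵀ(Ax + bμ) = (ρᵀ b) c₁ μ / (ρᵀ c)`, where `ρᵀ = e₁ᵀ adj(A)`. -/
theorem firstComponent_at_pseudoEquilibrium (n : ℕ)
    (A : Matrix (Fin (n + 2)) (Fin (n + 2)) ℝ) (b c : Fin (n + 2) → ℝ)
    (hA : IsUnit A.det) (hc : c 0 ≠ 0)
    (hrc : (A.adjugate.mulVec c) 0 ≠ 0) (μ : ℝ) (x : Fin (n + 2) → ℝ)
    (hx1 : x 0 = 0)
    (hx : A.mulVec x + μ • b - (((A.mulVec x + μ • b) 0) / c 0) • c = 0) :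
    (A.mulVec x + μ • b) 0
      = (A.adjugate.mulVec b) 0 * c 0 * μ / (A.adjugate.mulVec c) 0 := by
  set lam := (A.mulVec x + μ • b) 0 / c 0 with hlam
  have hAx : A.mulVec x = lam • c - μ • b := by
    have h := sub_eq_zero.mp hx
    rw [← h]; abel
  have key : A.adjugate.mulVec (A.mulVec x) = A.det • x := by
    rw [Matrix.mulVec_mulVec, Matrix.adjugate_mul, Matrix.smul_mulVec,
      Matrix.one_mulVec]
  rw [hAx, Matrix.mulVec_sub, Matrix.mulVec_smul, Matrix.mulVec_smul] at key
  have h0 := congrFun key 0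
  simp only [Pi.sub_apply, Pi.smul_apply, smul_eq_mul, hx1, mul_zero] at h0
  -- h0 : lam * (adj c)₀ - μ * (adj b)₀ = 0
  have hy0 : (A.mulVec x + μ • b) 0 = lam * c 0 := by
    rw [hlam]; field_simp
  rw [hy0]
  have : lam * (A.adjugate.mulVec c) 0 = μ * (A.adjugate.mulVec b) 0 := by
    linarith
  field_simp
  linear_combination this
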